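/- Let p and q be real numbers with p > q ≥ 1, let F : (0,∞) → ℝ be given by F(s) = s^q − s^p, and let c be a real number with c > (q−1)/(p−1). Then for every u > 0 and ε ∈ (0,1), the quantity H := (ε−1)F(u)/u + F'(u) satisfies H = u^{q−1}(q+ε−1) − u^{p−1}(p+ε−1); moreover there exists ε₀ ∈ (0,1) such that for all ε ∈ (0,ε₀) and all u > 0 with u^{p−q} ≥ c, one has H ≤ 0. -/
import Mathlib

lemma pnl_key (p q : ℝ) (ε : ℝ) (u : ℝ) (hu : 0 < u)
    (F : ℝ → ℝ) (hF : F = fun s => s ^ q - s ^ p) :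
    (ε - 1) * F u / u + deriv F u
      = u ^ (q - 1) * (q + ε - 1) - u ^ (p - 1) * (p + ε - 1) := by
  have hd : HasDerivAt F (q * u ^ (q - 1) - p * u ^ (p - 1)) u := by
    rw [hF]
    exact (Real.hasDerivAt_rpow_const (Or.inl hu.ne')).sub
      (Real.hasDerivAt_rpow_const (Or.inl hu.ne'))
  rw [hd.deriv, hF]
  have hq1 : u ^ q = u ^ (q - 1) * u := by
    rw [Real.rpow_sub hu, Real.rpow_one, div_mul_cancel₀ _ hu.ne']
  have hp1 : u ^ p = u ^ (p - 1) * u := by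
    rw [Real.rpow_sub hu, Real.rpow_one, div_mul_cancel₀ _ hu.ne']
  simp only
  rw [hq1, hp1]
  field_simp
  ring

/-- The computation in the final Corollary of Section 3 of the paper: for
`F(u) = u^q − u^p` with `p > q ≥ 1`, the quantity `H = (ε−1)F(u)/u + F'(u)` equals
`u^{q−1}(q+ε−1) − u^{p−1}(p+ε−1)` for `u > 0`, and if `c > (q−1)/(p−1)` then `H ≤ 0`
for all sufficiently small `ε ∈ (0,1)` and all `u > 0` with `u^{p−q} ≥ c`. -/
theorem power_nonlinearity_H_computation (p q c : ℝ) (hq : 1 ≤ q) (hpq : q < p)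
    (hc : c > (q - 1) / (p - 1)) (F : ℝ → ℝ) (hF : F = fun s => s ^ q - s ^ p) :
    (∀ ε ∈ Set.Ioo (0:ℝ) 1, ∀ u : ℝ, 0 < u →
      (ε - 1) * F u / u + deriv F u
        = u ^ (q - 1) * (q + ε - 1) - u ^ (p - 1) * (p + ε - 1)) ∧
    (∃ ε₀ ∈ Set.Ioo (0:ℝ) 1, ∀ ε ∈ Set.Ioo (0:ℝ) ε₀, ∀ u : ℝ, 0 < u →
      u ^ (p - q) ≥ c → (ε - 1) * F u / u + deriv F u ≤ 0) := by
  have hp1 : (0:ℝ) < p - 1 := by linarith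
  have hδ : 0 < c * (p - 1) - (q - 1) := by
    have := (div_lt_iff₀ hp1).mp hc
    linarith
  set δ := c * (p - 1) - (q - 1) with hδdef
  refine ⟨fun ε _ u hu => pnl_key p q ε u hu F hF, ?_⟩
  refine ⟨min (1/2) (δ / (|c - 1| + 1)), ?_, ?_⟩
  · constructor
    · apply lt_min (by norm_num)
      positivity
    · exact lt_of_le_of_lt (min_le_left _ _) (by norm_num)
  · rintro ε ⟨hε0, hε1⟩ u hu hcu
    rw [pnl_key p q ε u hu F hF]
    have hup : u ^ (p - 1) = u ^ (q - 1) * u ^ (p - q) := by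
      rw [← Real.rpow_add hu]; ring_nf
    rw [hup, sub_nonpos, mul_assoc]
    apply mul_le_mul_of_nonneg_left _ (Real.rpow_nonneg hu.le _)
    have hpε : 0 < p + ε - 1 := by linarith
    have h1 : c * (p + ε - 1) ≤ u ^ (p - q) * (p + ε - 1) :=
      mul_le_mul_of_nonneg_right hcu hpε.le
    have h2 : q + ε - 1 ≤ c * (p + ε - 1) := by
      have hεb : ε < δ / (|c - 1| + 1) := lt_of_lt_of_le hε1 (min_le_right _ _)
      have habs : |c - 1| + 1 > 0 := by positivity
      have h3 : ε * (|c - 1| + 1) < δ := (lt_div_iff₀ habs).mp hεb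
      have h4 : -(c - 1) ≤ |c - 1| := neg_le_abs _
      nlinarith [hε0]
    linarith
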